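/- Let d be a positive integer, J ↦ J' an involution of {1,...,d}, and λ_{IJ} = exp(−2πiθ_{IJ}) with θ_{IJ} real, θ_{IJ} = −θ_{JI} = −θ_{IJ'}. Define the d×d matrices K_{JL} := E_{JL'} − λ_{JL} E_{LJ'}, where E_{JK} are the elementary matrices. Then: (i) K_{JL} = −λ_{JL} K_{LJ}; (ii) with Q the permutation matrix Q_{JK} = δ_{J'K}, the entries satisfy ((K_{JL})^t Q)_{AB} = −λ_{AB} (Q K_{JL})_{AB}; (iii) the matrices close the braided Lie algebra so_θ(d) under the braided commutator [K_{IJ}, K_{ST}] := K_{IJ}K_{ST} − λ_{IS}λ_{IT}λ_{JS}λ_{JT} K_{ST}K_{IJ}, namely [K_{IJ}, K_{ST}] = δ_{JS'} K_{IT} − λ_{IJ} δ_{IS'} K_{JT} − λ_{ST}(δ_{JT'} K_{IS} − λ_{IJ} δ_{IT'} K_{JS}). -/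

import Mathlib

/-!
STATEMENT 15: braided `so_θ(d)` matrices.

Let `d` be a positive integer, `J ↦ J'` an involution of `{1,…,d}`, and
`λ_{IJ} = exp(−2πi θ_{IJ})` with `θ_{IJ}` real, `θ_{IJ} = −θ_{JI} = −θ_{IJ'}`.
With `E_{JK}` the elementary matrices and `K_{JL} := E_{JL'} − λ_{JL} E_{LJ'}`:
(i)  `K_{JL} = −λ_{JL} K_{LJ}`;
(ii) with `Q` the permutation matrix `Q_{JK} = δ_{J'K}`,
     `((K_{JL})^t Q)_{AB} = −λ_{AB} (Q K_{JL})_{AB}`;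
(iii) the `K`'s close the braided Lie algebra `so_θ(d)` under the braided commutator.
-/

noncomputable section

open scoped BigOperators Matrix

namespace Statement15

/-- The elementary `d × d` matrix with a single `1` in position `(J, K)`. -/
def E (d : ℕ) (J K : Fin d) : Matrix (Fin d) (Fin d) ℂ := Matrix.single J K 1

/-- Entry formula for the elementary matrices. -/
lemma E_apply {d : ℕ} (J K A B : Fin d) : E d J K A B = if J = A ∧ K = B then 1 else 0 := by
  simp [E, Matrix.single]

/-- Product formula for the elementary matrices. -/
lemma E_mul {d : ℕ} (J K S T : Fin d) :
    E d J K * E d S T = if K = S then E d J T else 0 := by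
  rcases eq_or_ne K S with h|h
  · subst h; simp [E, Matrix.single_mul_single_same]
  · simp [E, Matrix.single_mul_single_of_ne (h := h), h]

theorem braided_soTheta_matrices
    (d : ℕ) (hd : 0 < d)
    -- the involution `J ↦ J'`
    (inv : Fin d → Fin d) (hinv : ∀ I, inv (inv I) = I)
    -- real deformation parameters with `θ_{IJ} = −θ_{JI} = −θ_{IJ'}`
    (θ : Fin d → Fin d → ℝ)
    (hθ₁ : ∀ I J, θ I J = - θ J I)
    (hθ₂ : ∀ I J, θ I (inv J) = - θ I J)
    -- `λ_{IJ} = exp(−2πi θ_{IJ})`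
    (lam : Fin d → Fin d → ℂ)
    (hlam : ∀ I J, lam I J = Complex.exp (-(2 * (Real.pi : ℂ) * Complex.I) * (θ I J : ℂ)))
    -- the matrices `K_{JL} := E_{JL'} − λ_{JL} E_{LJ'}`
    (Kmat : Fin d → Fin d → Matrix (Fin d) (Fin d) ℂ)
    (hK : ∀ J L, Kmat J L = E d J (inv L) - lam J L • E d L (inv J))
    -- the permutation matrix `Q_{JK} = δ_{J'K}`
    (Q : Matrix (Fin d) (Fin d) ℂ)
    (hQ : ∀ J K, Q J K = if inv J = K then 1 else 0) :
    -- (i) braided antisymmetry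
    (∀ J L, Kmat J L = - (lam J L • Kmat L J)) ∧
    -- (ii) entry-wise antisymmetry with respect to `Q`
    (∀ J L A B, ((Kmat J L)ᵀ * Q) A B = - lam A B * ((Q * Kmat J L) A B)) ∧
    -- (iii) the braided `so_θ(d)` commutation relations
    (∀ I J S T,
      Kmat I J * Kmat S T - (lam I S * lam I T * lam J S * lam J T) • (Kmat S T * Kmat I J)
        = (if J = inv S then (1 : ℂ) else 0) • Kmat I T
          - lam I J • ((if I = inv S then (1 : ℂ) else 0) • Kmat J T)
          - lam S T • ((if J = inv T then (1 : ℂ) else 0) • Kmat I S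
              - lam I J • ((if I = inv T then (1 : ℂ) else 0) • Kmat J S))) := by
  have hθ0 : ∀ J, θ J J = 0 := fun J => by have := hθ₁ J J; linarith
  have lam_diag : ∀ J, lam J J = 1 := fun J => by
    rw [hlam, hθ0]; simp
  have lam_invr : ∀ I J, lam I (inv J) = lam J I := fun I J => by
    rw [hlam, hlam, hθ₂ I J, hθ₁ J I]
  have lam_invl : ∀ I J, lam (inv I) J = lam J I := fun I J => by
    rw [hlam, hlam, show θ (inv I) J = θ J I by rw [hθ₁ (inv I) J, hθ₂ J I, hθ₁ J I]; ring]
  have lam_mul : ∀ I J, lam I J * lam J I = 1 := fun I J => by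
    rw [hlam, hlam, ← Complex.exp_add, hθ₁ I J]
    push_cast; ring_nf; exact Complex.exp_zero
  have hiv : ∀ X Y : Fin d, inv X = Y ↔ X = inv Y := fun X Y =>
    ⟨fun h => by rw [← h, hinv], fun h => by rw [h, hinv]⟩
  -- part (i)
  have part1 : ∀ J L, Kmat J L = - (lam J L • Kmat L J) := by
    intro J L
    rw [hK, hK, smul_sub, smul_smul, lam_mul, one_smul, neg_sub]
  -- part (ii)
  have hMQ : ∀ (M : Matrix (Fin d) (Fin d) ℂ) A B, (M * Q) A B = M A (inv B) := by
    intro M A B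
    rw [Matrix.mul_apply]
    rw [Finset.sum_eq_single (inv B)]
    · rw [hQ, hinv, if_pos rfl, mul_one]
    · intro k _ hk
      rw [hQ, if_neg, mul_zero]
      intro h; exact hk ((hiv k B).mp h)
    · intro h; exact absurd (Finset.mem_univ _) h
  have hQM : ∀ (M : Matrix (Fin d) (Fin d) ℂ) A B, (Q * M) A B = M (inv A) B := by
    intro M A B
    rw [Matrix.mul_apply]
    rw [Finset.sum_eq_single (inv A)]
    · rw [hQ, if_pos rfl, one_mul]
    · intro k _ hk
      rw [hQ, if_neg, zero_mul]
      intro h; exact hk h.symm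
    · intro h; exact absurd (Finset.mem_univ _) h
  have part2 : ∀ J L A B, ((Kmat J L)ᵀ * Q) A B = - lam A B * ((Q * Kmat J L) A B) := by
    intro J L A B
    rw [hMQ, hQM, Matrix.transpose_apply, hK]
    simp only [Matrix.sub_apply, Matrix.smul_apply, E_apply, smul_eq_mul]
    have e24 : (J = inv A ∧ inv L = B) ↔ (L = inv B ∧ inv J = A) :=
      ⟨fun ⟨h1, h2⟩ => ⟨by rw [← h2, hinv], by rw [h1, hinv]⟩,
       fun ⟨h1, h2⟩ => ⟨by rw [← h2, hinv], by rw [h1, hinv]⟩⟩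
    have e13 : (L = inv A ∧ inv J = B) ↔ (J = inv B ∧ inv L = A) :=
      ⟨fun ⟨h1, h2⟩ => ⟨by rw [← h2, hinv], by rw [h1, hinv]⟩,
       fun ⟨h1, h2⟩ => ⟨by rw [← h2, hinv], by rw [h1, hinv]⟩⟩
    simp only [e24, e13]
    split_ifs with P1 P2 P2
    · obtain ⟨h1, h2⟩ := P1
      obtain ⟨h3, h4⟩ := P2
      have hLJ : L = J := h3.trans h1.symm
      subst hLJ
      simp [lam_diag]
    · obtain ⟨h1, h2⟩ := P1
      have hA : A = inv L := h2.symm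
      have hB : B = inv J := by rw [h1, hinv]
      subst hA hB
      rw [lam_invr, lam_invr]
      linear_combination (-1 : ℂ) * lam_mul L J
    · obtain ⟨h3, h4⟩ := P2
      have hB : B = inv L := by rw [h3, hinv]
      have hA : A = inv J := h4.symm
      subst hA hB
      rw [lam_invl, lam_invl]
      ring
    · ring
  have hsymm : ∀ X Y : Fin d, (X = inv Y) ↔ (Y = inv X) :=
    fun X Y => ⟨fun h => by rw [h, hinv], fun h => by rw [h, hinv]⟩
  have hKK : ∀ I J S T, Kmat I J * Kmat S T =
      (if J = inv S then E d I (inv T) else 0)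
      - lam S T • (if J = inv T then E d I (inv S) else 0)
      - lam I J • (if I = inv S then E d J (inv T) else 0)
      + (lam I J * lam S T) • (if I = inv T then E d J (inv S) else 0) := by
    intro I J S T
    rw [hK, hK]
    simp only [sub_mul, mul_sub, smul_mul_assoc, Matrix.mul_smul, smul_smul, E_mul, hiv]
    module
  have hinj : ∀ X Y : Fin d, (inv X = inv Y) ↔ (X = Y) :=
    fun X Y => ⟨fun h => by rw [← hinv X, h, hinv], fun h => by rw [h]⟩
  have part3 : ∀ I J S T,
      Kmat I J * Kmat S T - (lam I S * lam I T * lam J S * lam J T) • (Kmat S T * Kmat I J)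
        = (if J = inv S then (1 : ℂ) else 0) • Kmat I T
          - lam I J • ((if I = inv S then (1 : ℂ) else 0) • Kmat J T)
          - lam S T • ((if J = inv T then (1 : ℂ) else 0) • Kmat I S
              - lam I J • ((if I = inv T then (1 : ℂ) else 0) • Kmat J S)) := by
    intro I J S T
    rw [hKK I J S T, hKK S T I J, hK I T, hK J T, hK I S, hK J S]
    simp only [hsymm T I, hsymm T J, hsymm S I, hsymm S J]
    split_ifs
    all_goals subst_vars
    all_goals try (simp only [hinv, hinj, eq_self_iff_true, not_true_eq_false] at *)
    all_goals subst_vars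
    all_goals (
      try (simp only [hinv, lam_invl, lam_invr,
        lam_diag, smul_zero, mul_zero, zero_smul, sub_zero, zero_sub, add_zero, zero_add,
        one_smul, smul_sub, smul_smul, neg_neg, smul_neg, neg_zero, neg_sub, one_mul,
        mul_one]);
      try module)
    all_goals (match_scalars <;> try ring)
    all_goals try (linear_combination (lam S T) * lam_mul T S)
    all_goals try (linear_combination (lam J S * lam J T) * lam_mul T S)
    all_goals try (linear_combination (lam I S * lam S T) * lam_mul I T)
    all_goals try (linear_combination (-(lam S T * lam T S) - 1) * lam_mul S T)
    all_goals try (linear_combination (-(lam I T * lam T S * lam S T)) * lam_mul I S +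
      (-(lam I T)) * lam_mul T S)
  exact ⟨part1, part2, part3⟩

end Statement15
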